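/- Let C₁, …, C_N be nonempty closed convex subsets of a real Hilbert space H with projections P₁, …, P_N. For a starting point x⁰ ∈ H, define the cyclic projection orbit by x₁¹ := P₁(x⁰), x_i¹ := P_i(x_{i−1}¹) for i = 2, …, N, and x_iⁿ⁺¹ obtained by continuing cyclically (x₁ⁿ⁺¹ := P₁(x_Nⁿ), x_iⁿ⁺¹ := P_i(x_{i−1}ⁿ⁺¹)). Define the composite operators Q_i as the composition of the N projections starting and ending so that Q_i := P_i ∘ P_{i−1} ∘ ⋯ ∘ P₁ ∘ P_N ∘ ⋯ ∘ P_{i+1}, so that x_iⁿ = Q_i^{n−1}(x_i¹). Then the following dichotomy holds: (i) if every Q_i has no fixed point, then ‖x_iⁿ‖ → ∞ as n → ∞ for each i (the orbit has no bounded subsequence); (ii) if every Q_i has a fixed point, then for each i the sequence (x_iⁿ)ₙ converges weakly to some fixed point of Q_i. -/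

import Mathlib

open Filter

local notation "⟪" x ", " y "⟫" => @inner ℝ _ _ x y

/-- `P` is the metric (nearest-point) projection onto the set `C`. -/
def IsProjOn {H : Type*} [NormedAddCommGroup H] (P : H → H) (C : Set H) : Prop :=
  ∀ x : H, P x ∈ C ∧ ∀ y ∈ C, ‖x - P x‖ ≤ ‖x - y‖

/-- The composite operator `Q_i = P_i ∘ P_{i-1} ∘ ⋯ ∘ P₁ ∘ P_N ∘ ⋯ ∘ P_{i+1}`
(`0`-based: first `P (i+1)` is applied, then `P (i+2)`, …, and `P i` last,
with indices modulo `N`). -/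
def cycOp {H : Type*} {N : ℕ} [NeZero N] (P : Fin N → H → H) (i : Fin N) : H → H :=
  fun x => (List.ofFn fun j : Fin N => P (i + 1 + j)).foldl (fun y f => f y) x

set_option linter.unusedSectionVars false
set_option maxHeartbeats 1000000

section BBL
variable {H : Type*} [NormedAddCommGroup H] [InnerProductSpace ℝ H]

/-- averagedness-type quantitative nonexpansiveness -/
def IsAvg (Q : H → H) (β : ℝ) : Prop :=
  ∀ x y : H, ‖Q x - Q y‖^2 + β * ‖(x - Q x) - (y - Q y)‖^2 ≤ ‖x - y‖^2

lemma young (A B : H) {t : ℝ} (ht : 0 < t) :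
    ‖A + B‖^2 ≤ (1+t)*‖A‖^2 + (1+1/t)*‖B‖^2 := by
  have h1 : ‖A + B‖^2 = ‖A‖^2 + 2*⟪A,B⟫ + ‖B‖^2 := by
    rw [@norm_add_sq_real]
  have h2 : ⟪A,B⟫ ≤ ‖A‖ * ‖B‖ := real_inner_le_norm A B
  have h6 : 2*(‖A‖*‖B‖) ≤ t*‖A‖^2 + (1/t)*‖B‖^2 := by
    have h3 : 0 ≤ (t*‖A‖ - ‖B‖)^2 := sq_nonneg _
    have expand : t*((t*‖A‖^2 + (1/t)*‖B‖^2) - 2*(‖A‖*‖B‖)) = (t*‖A‖ - ‖B‖)^2 := by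
      field_simp; ring
    nlinarith
  nlinarith

lemma sq_le_sq_of_norm {a b : ℝ} (h : a^2 ≤ b^2) (ha : 0 ≤ a) (hb : 0 ≤ b) : a ≤ b := by
  nlinarith

lemma IsAvg.nonexp {Q : H → H} {β : ℝ} (hQ : IsAvg Q β) (hβ : 0 ≤ β) (x y : H) :
    ‖Q x - Q y‖ ≤ ‖x - y‖ := by
  have := hQ x y
  have h2 : 0 ≤ β * ‖(x - Q x) - (y - Q y)‖^2 := by positivity
  exact sq_le_sq_of_norm (by linarith) (norm_nonneg _) (norm_nonneg _)

/-- monotonicity-type inequality -/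
lemma IsAvg.inner_ge {Q : H → H} {β : ℝ} (hQ : IsAvg Q β) (hβ : 0 ≤ β) (x y : H) :
    (1+β)/2 * ‖(x - Q x) - (y - Q y)‖^2 ≤ ⟪x - y, (x - Q x) - (y - Q y)⟫ := by
  have h := hQ x y
  have expand : ‖Q x - Q y‖^2
      = ‖x - y‖^2 - 2*⟪x - y, (x - Q x) - (y - Q y)⟫ + ‖(x - Q x) - (y - Q y)‖^2 := by
    have : Q x - Q y = (x - y) - ((x - Q x) - (y - Q y)) := by abel
    rw [this, @norm_sub_sq_real]
  nlinarith

/-- composition step -/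
lemma IsAvg.comp {F g : H → H} {a : ℝ} (hF : IsAvg F a) (hg : IsAvg g 1) (ha : 0 < a) :
    IsAvg (fun x => g (F x)) (a/(a+1)) := by
  intro x y
  have h1 := hF x y
  have h2 := hg (F x) (F y)
  set A := (x - F x) - (y - F y) with hA
  set B := (F x - g (F x)) - (F y - g (F y)) with hB
  have hAB : (x - g (F x)) - (y - g (F y)) = A + B := by rw [hA, hB]; abel
  have hy := young A B ha
  have key : (a/(a+1)) * ‖A + B‖^2 ≤ a*‖A‖^2 + ‖B‖^2 := by
    have h3 : (a/(a+1)) * ((1+a)*‖A‖^2 + (1+1/a)*‖B‖^2) = a*‖A‖^2 + ‖B‖^2 := by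
      field_simp; ring
    have h4 : 0 ≤ a/(a+1) := by positivity
    nlinarith
  simp only [hAB]
  nlinarith

/-- variational inequality for metric projections -/
lemma IsProjOn.vi {P : H → H} {C : Set H} (hP : IsProjOn P C) (hcv : Convex ℝ C)
    (x : H) {w : H} (hw : w ∈ C) : ⟪x - P x, w - P x⟫ ≤ 0 := by
  have hne : Nonempty C := ⟨⟨P x, (hP x).1⟩⟩
  have key : ‖x - P x‖ = ⨅ w : C, ‖x - w‖ := by
    apply le_antisymm
    · exact le_ciInf fun ⟨w', hw'⟩ => (hP x).2 w' hw'
    · exact ciInf_le ⟨0, by rintro b ⟨w', rfl⟩; exact norm_nonneg _⟩ (⟨P x, (hP x).1⟩ : C)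
  exact (norm_eq_iInf_iff_real_inner_le_zero hcv (hP x).1).1 key w hw

lemma IsProjOn.isAvg {P : H → H} {C : Set H} (hP : IsProjOn P C) (hcv : Convex ℝ C) :
    IsAvg P 1 := by
  intro x y
  have h1 : ⟪x - P x, P y - P x⟫ ≤ 0 := hP.vi hcv x (hP y).1
  have h2 : ⟪y - P y, P x - P y⟫ ≤ 0 := hP.vi hcv y (hP x).1
  have hfirm : ‖P x - P y‖^2 ≤ ⟪x - y, P x - P y⟫ := by
    have e1 : ⟪x - P x, P y - P x⟫ = -⟪x - P x, P x - P y⟫ := by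
      rw [← inner_neg_right]; congr 1; abel
    have e2 : ⟪y - P y, P x - P y⟫ = ⟪y - P y, P x - P y⟫ := rfl
    have add : ⟪(x - P x) - (y - P y), P x - P y⟫ ≥ 0 := by
      rw [inner_sub_left]; rw [e1] at h1; linarith
    have expand : ⟪x - y, P x - P y⟫
        = ⟪(x - P x) - (y - P y), P x - P y⟫ + ‖P x - P y‖^2 := by
      rw [← real_inner_self_eq_norm_sq, ← inner_add_left]; congr 1; abel
    linarith [add, expand.ge, expand.le]
  have expand2 : ‖(x - P x) - (y - P y)‖^2
      = ‖x - y‖^2 - 2*⟪x - y, P x - P y⟫ + ‖P x - P y‖^2 := by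
    have : (x - P x) - (y - P y) = (x - y) - (P x - P y) := by abel
    rw [this, @norm_sub_sq_real]
  nlinarith

lemma isAvg_foldl (l : List (H → H)) (h : ∀ f ∈ l, IsAvg f 1) (hl : l ≠ []) :
    IsAvg (fun x => l.foldl (fun y f => f y) x) (1/(l.length : ℝ)) := by
  induction l using List.reverseRecOn with
  | nil => exact absurd rfl hl
  | append_singleton l g ih =>
    rcases eq_or_ne l [] with rfl | hl'
    · simpa using h g (by simp)
    · have hlen : 0 < (l.length : ℝ) := by
        have : l.length ≠ 0 := by simpa using hl'
        positivity
      have hF := ih (fun f hf => h f (by simp [hf])) hl'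
      have hg : IsAvg g 1 := h g (by simp)
      have := hF.comp hg (by positivity)
      have e : (1/(l.length:ℝ))/((1/(l.length:ℝ))+1) = 1/(((l ++ [g]).length : ℝ)) := by
        simp only [List.length_append, List.length_singleton]
        push_cast
        field_simp; ring
      rw [e] at this
      simpa [List.foldl_append] using this

lemma isAvg_cycOp {N : ℕ} [NeZero N] (P : Fin N → H → H)
    (hP : ∀ i, IsAvg (P i) 1) (i : Fin N) : IsAvg (cycOp P i) (1/(N:ℝ)) := by
  have := isAvg_foldl (H := H) (List.ofFn fun j : Fin N => P (i + 1 + j)) ?_ ?_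
  · rw [show cycOp P i = fun x => (List.ofFn fun j : Fin N => P (i + 1 + j)).foldl (fun y f => f y) x from rfl]
    simpa using this
  · intro f hf
    rw [List.mem_ofFn] at hf
    obtain ⟨j, rfl⟩ := hf
    exact hP _
  · simp [List.ofFn_eq_nil_iff, NeZero.ne N]

variable {Q : H → H} {β : ℝ}

/-- telescoping sum of squared displacement differences -/
lemma IsAvg.sum_sq (hQ : IsAvg Q β) (x y : H) (n : ℕ) :
    β * ∑ t ∈ Finset.range n,
      ‖(Q^[t] x - Q^[t+1] x) - (Q^[t] y - Q^[t+1] y)‖^2 ≤ ‖x - y‖^2 := by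
  have key : ∀ n, ‖Q^[n] x - Q^[n] y‖^2 + β * ∑ t ∈ Finset.range n,
      ‖(Q^[t] x - Q^[t+1] x) - (Q^[t] y - Q^[t+1] y)‖^2 ≤ ‖x - y‖^2 := by
    intro n
    induction n with
    | zero => simp
    | succ n ih =>
      have step := hQ (Q^[n] x) (Q^[n] y)
      rw [Finset.sum_range_succ]
      simp only [Function.iterate_succ_apply'] at *
      nlinarith [step, ih]
  have h := key n
  nlinarith [sq_nonneg ‖Q^[n] x - Q^[n] y‖, key n]

lemma IsAvg.delta_anti (hQ : IsAvg Q β) (hβ : 0 ≤ β) (x : H) :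
    Antitone (fun n => ‖Q^[n] x - Q^[n+1] x‖) := by
  apply antitone_nat_of_succ_le
  intro n
  simp only [Function.iterate_succ_apply']
  exact hQ.nonexp hβ _ _

lemma IsAvg.dist_fix_anti (hQ : IsAvg Q β) (hβ : 0 ≤ β) (x z : H) (hz : Q z = z) :
    Antitone (fun n => ‖Q^[n] x - z‖) := by
  apply antitone_nat_of_succ_le
  intro n
  simp only [Function.iterate_succ_apply']
  calc ‖Q (Q^[n] x) - z‖ = ‖Q (Q^[n] x) - Q z‖ := by rw [hz]
  _ ≤ _ := hQ.nonexp hβ _ _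

variable [CompleteSpace H]

lemma IsAvg.mono (hQ : IsAvg Q β) (hβ : 0 ≤ β) (x y : H) :
    0 ≤ ⟪x - y, (x - Q x) - (y - Q y)⟫ := by
  have h := hQ.inner_ge hβ x y
  nlinarith [sq_nonneg ‖(x - Q x) - (y - Q y)‖]

/-- solve `z - Q z = -μ • z` by Banach fixed point -/
lemma IsAvg.resolvent (hQ : IsAvg Q β) (hβ : 0 ≤ β) {μ : ℝ} (hμ0 : 0 < μ) (hμ1 : μ ≤ 1) :
    ∃ z : H, z - Q z = -μ • z := by
  classical
  set γ : ℝ := μ/9 with hγ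
  set T : H → H := fun z => z - γ • ((z - Q z) + μ • z) with hT
  have hcontr : ∀ z z' : H, ‖T z - T z'‖^2 ≤ (1 - μ^2/9) * ‖z - z'‖^2 := by
    intro z z'
    set D := (z - Q z) - (z' - Q z') with hD
    set F := D + μ • (z - z') with hF
    have hTz : T z - T z' = (z - z') - γ • F := by
      simp only [hT, hF, hD, smul_add]
      module
    have hDnorm : ‖D‖ ≤ 2 * ‖z - z'‖ := by
      have : D = (z - z') - (Q z - Q z') := by rw [hD]; abel
      rw [this]
      calc ‖(z - z') - (Q z - Q z')‖ ≤ ‖z - z'‖ + ‖Q z - Q z'‖ := norm_sub_le _ _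
      _ ≤ 2 * ‖z - z'‖ := by linarith [hQ.nonexp hβ z z']
    have hFnorm : ‖F‖ ≤ 3 * ‖z - z'‖ := by
      calc ‖F‖ ≤ ‖D‖ + ‖μ • (z - z')‖ := norm_add_le _ _
      _ ≤ 2*‖z - z'‖ + |μ| * ‖z - z'‖ := by rw [norm_smul]; simp [Real.norm_eq_abs]; linarith [hDnorm]
      _ ≤ 3 * ‖z - z'‖ := by rw [abs_of_pos hμ0]; nlinarith [norm_nonneg (z - z')]
    have hFinner : μ * ‖z - z'‖^2 ≤ ⟪z - z', F⟫ := by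
      rw [hF, inner_add_right, real_inner_smul_right, real_inner_self_eq_norm_sq]
      have := hQ.mono hβ z z'
      nlinarith
    have expand : ‖T z - T z'‖^2 = ‖z - z'‖^2 - 2*γ*⟪z - z', F⟫ + γ^2*‖F‖^2 := by
      rw [hTz, @norm_sub_sq_real, real_inner_smul_right, norm_smul]
      simp [Real.norm_eq_abs, abs_of_pos (by positivity : (0:ℝ) < γ)]
      ring
    have hγpos : 0 < γ := by positivity
    have hF2 : ‖F‖^2 ≤ 9 * ‖z - z'‖^2 := by nlinarith [norm_nonneg F, norm_nonneg (z - z')]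
    rw [expand, hγ]
    nlinarith
  have hk1 : (1 - μ^2/9) < 1 := by nlinarith
  have hk0 : (0:ℝ) ≤ 1 - μ^2/9 := by nlinarith
  set k : NNReal := Real.toNNReal (Real.sqrt (1 - μ^2/9)) with hk
  have hlip : LipschitzWith k T := by
    apply LipschitzWith.of_dist_le_mul
    intro z z'
    rw [dist_eq_norm, dist_eq_norm]
    have h1 := hcontr z z'
    have hs : ((k : ℝ)) = Real.sqrt (1 - μ^2/9) := by
      rw [hk, Real.coe_toNNReal _ (Real.sqrt_nonneg _)]
    rw [hs]
    have : ‖T z - T z'‖ ≤ Real.sqrt ((1 - μ^2/9) * ‖z - z'‖^2) := by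
      rw [← Real.sqrt_sq (norm_nonneg (T z - T z'))]
      exact Real.sqrt_le_sqrt h1
    rw [Real.sqrt_mul hk0, Real.sqrt_sq (norm_nonneg _)] at this
    exact this
  have hck : k < 1 := by
    have hs1 : Real.sqrt (1 - μ^2/9) < 1 := by
      calc Real.sqrt (1 - μ^2/9) < Real.sqrt 1 := Real.sqrt_lt_sqrt hk0 hk1
      _ = 1 := by simp
    rw [hk, ← Real.toNNReal_one]
    rw [Real.toNNReal_lt_toNNReal_iff (by norm_num)]
    exact hs1
  have hcw : ContractingWith k T := ⟨hck, hlip⟩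
  have : Nonempty H := ⟨0⟩
  obtain ⟨z, hz⟩ := hcw.exists_fixedPoint (0 : H) (by
    exact edist_ne_top _ _)
  have hfix : T z = z := hz.1
  refine ⟨z, ?_⟩
  have : γ • ((z - Q z) + μ • z) = 0 := by
    have := hfix
    simp only [hT] at this
    have h2 : z - γ • ((z - Q z) + μ • z) = z := this
    have := sub_eq_self.mp h2
    exact this
  have hγ0 : γ ≠ 0 := by positivity
  have h3 : (z - Q z) + μ • z = 0 := by
    rcases smul_eq_zero.mp this with h | h
    · exact absurd h hγ0
    · exact h
  have : z - Q z = -(μ • z) := by linear_combination (norm := module) h3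
  simpa using this

/-- if 0 is in the closed convex hull of the range of the displacement, the
minimal displacement is 0 -/
lemma IsAvg.small_displacement (hQ : IsAvg Q β) (hβ : 0 ≤ β)
    (h0 : (0:H) ∈ closure (convexHull ℝ (Set.range (fun y => y - Q y))))
    {ε : ℝ} (hε : 0 < ε) : ∃ y : H, ‖y - Q y‖ ≤ ε := by
  classical
  -- the auxiliary convex set
  set S : Set H := {w | ∃ yb : H, ∃ c : ℝ, 0 ≤ c ∧ ∀ z : H, ∀ μ : ℝ, 0 < μ →
    z - Q z = -μ • z → μ * ‖z‖^2 ≤ μ * ⟪yb, z⟫ - ⟪z, w⟫ + c} with hS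
  have hrange : Set.range (fun y => y - Q y) ⊆ S := by
    rintro _ ⟨y, rfl⟩
    refine ⟨y, |⟪y, y - Q y⟫|, abs_nonneg _, ?_⟩
    intro z μ hμ hz
    have hmono := hQ.mono hβ z y
    rw [hz] at hmono
    simp only [inner_sub_left, inner_sub_right, real_inner_smul_right, neg_smul,
      inner_neg_right, real_inner_self_eq_norm_sq] at hmono ⊢
    linarith [hmono, le_abs_self (‖y‖^2 - ⟪y, Q y⟫)]
  have hconv : Convex ℝ S := by
    rintro w₁ ⟨y₁, c₁, hc₁, h₁⟩ w₂ ⟨y₂, c₂, hc₂, h₂⟩ a b ha hb hab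
    refine ⟨a • y₁ + b • y₂, a*c₁ + b*c₂, by positivity, ?_⟩
    intro z μ hμ hz
    have e1 := h₁ z μ hμ hz
    have e2 := h₂ z μ hμ hz
    have ei : ⟪a • y₁ + b • y₂, z⟫ = a * ⟪y₁, z⟫ + b * ⟪y₂, z⟫ := by
      rw [inner_add_left, real_inner_smul_left, real_inner_smul_left]
    have ew : ⟪z, a • w₁ + b • w₂⟫ = a * ⟪z, w₁⟫ + b * ⟪z, w₂⟫ := by
      rw [inner_add_right, real_inner_smul_right, real_inner_smul_right]
    rw [ei, ew]
    have hx : μ*‖z‖^2 = a*(μ*‖z‖^2) + b*(μ*‖z‖^2) := by rw [← add_mul, hab, one_mul]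
    linarith [mul_le_mul_of_nonneg_left e1 ha, mul_le_mul_of_nonneg_left e2 hb, hx]
  have hSch : convexHull ℝ (Set.range (fun y => y - Q y)) ⊆ S :=
    convexHull_min hrange hconv
  -- find w ∈ S with small norm
  obtain ⟨w, hwS, hwn⟩ : ∃ w ∈ convexHull ℝ (Set.range (fun y => y - Q y)), ‖w‖ < ε/3 := by
    rw [Metric.mem_closure_iff] at h0
    obtain ⟨w, hw, hd⟩ := h0 (ε/3) (by positivity)
    exact ⟨w, hw, by rwa [dist_comm, dist_zero_right] at hd⟩
  obtain ⟨yb, c, hc, hkey⟩ := hSch hwS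
  -- choose μ
  set μ : ℝ := min 1 (min (ε/(3*(‖yb‖+1))) (ε^2/(9*(c+1)))) with hμdef
  have hμ0 : 0 < μ := by
    apply lt_min (by norm_num)
    apply lt_min <;> positivity
  have hμ1 : μ ≤ 1 := min_le_left _ _
  have hμa : μ * ‖yb‖ ≤ ε/3 := by
    have h1 : μ ≤ ε/(3*(‖yb‖+1)) := le_trans (min_le_right _ _) (min_le_left _ _)
    have h3 : μ * ‖yb‖ ≤ ε/(3*(‖yb‖+1)) * ‖yb‖ := mul_le_mul_of_nonneg_right h1 (norm_nonneg _)
    have h4 : ε/(3*(‖yb‖+1)) * ‖yb‖ ≤ ε/3 := by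
      rw [div_mul_eq_mul_div, div_le_div_iff₀ (by positivity) (by norm_num)]
      nlinarith [norm_nonneg yb]
    linarith
  have hμc : μ * c ≤ ε^2/9 := by
    have h1 : μ ≤ ε^2/(9*(c+1)) := le_trans (min_le_right _ _) (min_le_right _ _)
    have h2 : 0 < 9*(c+1) := by positivity
    rw [le_div_iff₀ h2] at h1
    nlinarith
  obtain ⟨z, hz⟩ := hQ.resolvent hβ hμ0 hμ1
  have hest := hkey z μ hμ0 hz
  -- bound r = μ‖z‖ = ‖z - Q z‖
  have hr : ‖z - Q z‖ = μ * ‖z‖ := by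
    rw [hz, norm_smul]
    simp [Real.norm_eq_abs, abs_of_pos hμ0]
  have hCS1 : ⟪yb, z⟫ ≤ ‖yb‖ * ‖z‖ := real_inner_le_norm _ _
  have hCS2 : -⟪z, w⟫ ≤ ‖z‖ * ‖w‖ := by
    have := real_inner_le_norm z w
    have h2 := abs_real_inner_le_norm z w
    have := neg_abs_le ⟪z, w⟫
    linarith [abs_real_inner_le_norm z w, neg_abs_le ⟪z, w⟫]
  set r : ℝ := μ * ‖z‖ with hrdef
  have hr0 : 0 ≤ r := by positivity
  have hquad : r^2 ≤ r * (μ*‖yb‖ + ‖w‖) + μ * c := by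
    have hmul := mul_le_mul_of_nonneg_left hest hμ0.le
    have e1 : μ * (μ * ‖z‖^2) = r^2 := by rw [hrdef]; ring
    have hz0 := norm_nonneg z
    nlinarith [mul_le_mul_of_nonneg_left hCS1 (by positivity : (0:ℝ) ≤ μ*μ),
      mul_le_mul_of_nonneg_left hCS2 (by positivity : (0:ℝ) ≤ μ)]
  refine ⟨z, ?_⟩
  rw [hr]
  by_contra hcon
  push_neg at hcon
  have h23 : r * (μ*‖yb‖ + ‖w‖) ≤ r * (2*ε/3) := by
    apply mul_le_mul_of_nonneg_left _ hr0
    linarith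
  have : r^2 ≤ r * (2*ε/3) + ε^2/9 := by linarith
  nlinarith

lemma exists_fixed_of_bounded_subseq (hQ : IsAvg Q β) (hβ : 0 ≤ β) (x : H)
    (hreg : Tendsto (fun n => ‖Q^[n] x - Q^[n+1] x‖) atTop (nhds 0))
    {φ : ℕ → ℕ} (hφ : StrictMono φ) {M : ℝ} (hM : ∀ k, ‖Q^[φ k] x‖ ≤ M) :
    ∃ c : H, Q c = c := by
  classical
  set a : ℕ → H := fun k => Q^[φ k] x with ha
  have hM0 : 0 ≤ M := le_trans (norm_nonneg _) (hM 0)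
  -- basic bounds
  have hbd : ∀ y : H, ∀ k, ‖a k - y‖^2 ≤ (M + ‖y‖)^2 := by
    intro y k
    have h1 : ‖a k - y‖ ≤ M + ‖y‖ := (norm_sub_le _ _).trans (by linarith [hM k])
    nlinarith [norm_nonneg (a k - y)]
  have hBdd : ∀ y : H, IsBoundedUnder (· ≤ ·) atTop (fun k => ‖a k - y‖^2) :=
    fun y => isBoundedUnder_of ⟨(M + ‖y‖)^2, fun k => hbd y k⟩
  have hCob : ∀ y : H, IsCoboundedUnder (· ≤ ·) atTop (fun k => ‖a k - y‖^2) :=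
    fun y => (isBoundedUnder_of ⟨0, fun k => sq_nonneg _⟩ :
      IsBoundedUnder (· ≥ ·) atTop _).isCoboundedUnder_le
  set s : H → ℝ := fun y => limsup (fun k => ‖a k - y‖^2) atTop with hs
  have hs_le : ∀ y : H, ∀ b : ℝ, (∀ᶠ k in atTop, ‖a k - y‖^2 ≤ b) → s y ≤ b :=
    fun y b h => limsup_le_of_le (hCob y) h
  have hs_ev : ∀ y : H, ∀ ε > (0:ℝ), ∀ᶠ k in atTop, ‖a k - y‖^2 ≤ s y + ε := by
    intro y ε hε
    have := eventually_lt_of_limsup_lt (show s y < s y + ε by linarith) (hBdd y)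
    exact this.mono fun k hk => hk.le
  have hs0 : ∀ y : H, 0 ≤ s y := fun y =>
    le_limsup_of_frequently_le (Frequently.of_forall fun k => sq_nonneg _) (hBdd y)
  -- the infimum
  have hne : Nonempty H := ⟨0⟩
  have hbdd_range : BddBelow (Set.range s) := ⟨0, by rintro _ ⟨y, rfl⟩; exact hs0 y⟩
  set σ : ℝ := ⨅ y : H, s y with hσ
  have hσ_le : ∀ y, σ ≤ s y := fun y => ciInf_le hbdd_range y
  -- midpoint inequality
  have hmid : ∀ y z : H, s ((1/2 : ℝ) • (y + z)) ≤ (s y + s z)/2 - ‖y - z‖^2/4 := by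
    intro y z
    have hpt : ∀ k, ‖a k - (1/2 : ℝ) • (y + z)‖^2
        = ‖a k - y‖^2/2 + ‖a k - z‖^2/2 - ‖y - z‖^2/4 := by
      intro k
      have hu : a k - y = (a k - (1/2 : ℝ) • (y + z)) - ((1/2 : ℝ) • (y - z)) := by module
      have hv : a k - z = (a k - (1/2 : ℝ) • (y + z)) + ((1/2 : ℝ) • (y - z)) := by module
      have hpar := parallelogram_law_with_norm ℝ
        (a k - (1/2 : ℝ) • (y + z)) ((1/2 : ℝ) • (y - z))
      have hw : ‖(1/2 : ℝ) • (y - z)‖^2 = ‖y - z‖^2/4 := by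
        rw [norm_smul]; simp [Real.norm_eq_abs]; ring
      rw [hu, hv]
      nlinarith [hpar, hw]
    apply le_of_forall_pos_le_add
    intro ε hε
    apply hs_le
    filter_upwards [hs_ev y (ε) hε, hs_ev z (ε) hε] with k h1 h2
    rw [hpt k]
    linarith
  -- minimizing sequence
  have hmin : ∀ j : ℕ, ∃ p : H, s p < σ + 1/(j+1) := by
    intro j
    apply exists_lt_of_ciInf_lt
    rw [← hσ]
    have : (0:ℝ) < 1/(j+1) := by positivity
    linarith
  choose p hp using hmin
  -- Cauchy
  have hpc : ∀ j l : ℕ, ‖p j - p l‖^2 ≤ 2*(1/(j+1) + 1/(l+1)) := by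
    intro j l
    have h1 := hmid (p j) (p l)
    have h2 := hσ_le ((1/2 : ℝ) • (p j + p l))
    have := hp j; have := hp l
    nlinarith
  have hcauchy : CauchySeq p := by
    rw [Metric.cauchySeq_iff]
    intro ε hε
    obtain ⟨K, hK⟩ := exists_nat_gt (4/ε^2)
    refine ⟨K, fun j hj l hl => ?_⟩
    rw [dist_eq_norm]
    have h4 : (0:ℝ) < 4/ε^2 := by positivity
    have hK0 : (0:ℝ) < K := lt_trans h4 hK
    have hb : ‖p j - p l‖^2 ≤ 4*(1/((K:ℝ)+1)) := by
      have l1 : 1/((j:ℝ)+1) ≤ 1/((K:ℝ)+1) := by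
        apply one_div_le_one_div_of_le (by positivity)
        have := (Nat.cast_le (α := ℝ)).2 hj; linarith
      have l2 : 1/((l:ℝ)+1) ≤ 1/((K:ℝ)+1) := by
        apply one_div_le_one_div_of_le (by positivity)
        have := (Nat.cast_le (α := ℝ)).2 hl; linarith
      have := hpc j l
      linarith
    have hKe : 4*(1/((K:ℝ)+1)) < ε^2 := by
      have h5 : (4:ℝ)/ε^2 < (K:ℝ) + 1 := by linarith
      have h6 : 1/((K:ℝ)+1) < 1/((4:ℝ)/ε^2) := one_div_lt_one_div_of_lt (by positivity) h5
      rw [one_div_div] at h6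
      linarith
    nlinarith [norm_nonneg (p j - p l), hε]
  obtain ⟨c, hc⟩ := cauchySeq_tendsto_of_complete hcauchy
  -- s c = σ  (we only need s c ≤ σ)
  have hsc : s c ≤ σ := by
    apply le_of_forall_pos_le_add
    intro ε hε
    set B : ℝ := 2*M + 2*‖c‖ + 3 with hB
    have hB0 : 0 < B := by positivity
    have : ∀ᶠ j in atTop, ‖p j - c‖ < min 1 (ε/(2*B)) := by
      rw [Metric.tendsto_atTop] at hc
      obtain ⟨K, hK⟩ := hc (min 1 (ε/(2*B))) (by positivity)
      exact eventually_atTop.2 ⟨K, fun j hj => by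
        have := hK j hj; rwa [dist_eq_norm] at this⟩
    obtain ⟨K2, hK2⟩ := exists_nat_gt (4/ε)
    obtain ⟨j, hj1, hj2⟩ := (this.and (eventually_ge_atTop K2)).exists
    -- pointwise comparison
    have hptc : ∀ k, ‖a k - c‖^2 ≤ ‖a k - p j‖^2 + B * ‖p j - c‖ := by
      intro k
      have t1 : ‖a k - c‖ ≤ ‖a k - p j‖ + ‖p j - c‖ := by
        have : a k - c = (a k - p j) + (p j - c) := by abel
        rw [this]; exact norm_add_le _ _
      have t2 : ‖a k - p j‖ ≤ M + ‖p j‖ := (norm_sub_le _ _).trans (by linarith [hM k])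
      have t3 : ‖p j‖ ≤ ‖c‖ + 1 := by
        have : ‖p j‖ - ‖c‖ ≤ ‖p j - c‖ := by
          have := norm_sub_norm_le (p j) c; linarith
        have h1 : ‖p j - c‖ ≤ 1 := le_of_lt (lt_of_lt_of_le hj1 (min_le_left _ _))
        linarith
      have h1 : ‖p j - c‖ ≤ 1 := le_of_lt (lt_of_lt_of_le hj1 (min_le_left _ _))
      have hnn := norm_nonneg (a k - p j)
      have hnn2 := norm_nonneg (p j - c)
      have hsq : ‖a k - c‖^2 ≤ (‖a k - p j‖ + ‖p j - c‖)^2 := by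
        nlinarith [norm_nonneg (a k - c)]
      have hy : ‖a k - p j‖ ≤ M + ‖c‖ + 1 := by linarith
      have hprod := mul_le_mul_of_nonneg_right hy hnn2
      have hd2 := mul_le_mul_of_nonneg_left h1 hnn2
      nlinarith [hsq, hprod, hd2]
    have hεB : B * ‖p j - c‖ ≤ ε/2 := by
      have h2 : ‖p j - c‖ ≤ ε/(2*B) := le_of_lt (lt_of_lt_of_le hj1 (min_le_right _ _))
      calc B * ‖p j - c‖ ≤ B * (ε/(2*B)) := by
            exact mul_le_mul_of_nonneg_left h2 hB0.le
      _ = ε/2 := by field_simp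
    apply hs_le
    have hj3 : 4/ε < (j:ℝ) := lt_of_lt_of_le hK2 ((Nat.cast_le (α := ℝ)).2 hj2)
    have hj5 : 4 < (j:ℝ)*ε := by rwa [div_lt_iff₀ hε] at hj3
    have hj4 : 1/((j:ℝ)+1) < ε/4 := by
      rw [div_lt_div_iff₀ (by positivity) (by norm_num)]
      nlinarith
    filter_upwards [hs_ev (p j) (ε/4) (by positivity)] with k hk
    calc ‖a k - c‖^2 ≤ ‖a k - p j‖^2 + B * ‖p j - c‖ := hptc k
    _ ≤ (s (p j) + ε/4) + ε/2 := by linarith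
    _ ≤ (σ + 1/((j:ℝ)+1) + ε/4) + ε/2 := by linarith [hp j]
    _ ≤ σ + ε := by linarith
  -- Q c is also a minimizer
  have hdk : Tendsto (fun k => ‖Q^[φ k] x - Q^[φ k + 1] x‖) atTop (nhds 0) :=
    hreg.comp hφ.tendsto_atTop
  have hsqc : s (Q c) ≤ σ := by
    apply le_of_forall_pos_le_add
    intro ε hε
    set B2 : ℝ := 2*(M + ‖c‖) + 2 with hB2
    have hB20 : 0 < B2 := by positivity
    have hev1 : ∀ᶠ k in atTop, ‖Q^[φ k] x - Q^[φ k + 1] x‖ < min 1 (ε/(2*B2)) := by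
      rw [Metric.tendsto_atTop] at hdk
      obtain ⟨K, hK⟩ := hdk _ (by positivity : (0:ℝ) < min 1 (ε/(2*B2)))
      exact eventually_atTop.2 ⟨K, fun k hk => by
        have := hK k hk; rwa [dist_zero_right, Real.norm_eq_abs, abs_norm] at this⟩
    apply hs_le
    filter_upwards [hev1, hs_ev c (ε/2) (by positivity)] with k h1 h2
    set d : ℝ := ‖Q^[φ k] x - Q^[φ k + 1] x‖ with hd
    have hd0 : 0 ≤ d := norm_nonneg _
    have hd1 : d ≤ 1 := le_of_lt (lt_of_lt_of_le h1 (min_le_left _ _))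
    have hd2 : d ≤ ε/(2*B2) := le_of_lt (lt_of_lt_of_le h1 (min_le_right _ _))
    have t1 : ‖a k - Q c‖ ≤ d + ‖a k - c‖ := by
      have e1 : a k - Q c = (Q^[φ k] x - Q^[φ k + 1] x) + (Q (a k) - Q c) := by
        rw [ha]
        simp only [Function.iterate_succ_apply']
        abel
      calc ‖a k - Q c‖ ≤ ‖Q^[φ k] x - Q^[φ k + 1] x‖ + ‖Q (a k) - Q c‖ := by
            rw [e1]; exact norm_add_le _ _
      _ ≤ d + ‖a k - c‖ := by
            have := hQ.nonexp hβ (a k) c; rw [← hd]; linarith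
    have t2 : ‖a k - c‖ ≤ M + ‖c‖ := (norm_sub_le _ _).trans (by linarith [hM k])
    have hεB2 : B2 * d ≤ ε/2 := by
      calc B2 * d ≤ B2 * (ε/(2*B2)) := mul_le_mul_of_nonneg_left hd2 hB20.le
      _ = ε/2 := by field_simp
    have hnn := norm_nonneg (a k - Q c)
    have hnn2 := norm_nonneg (a k - c)
    nlinarith
  -- conclusion
  refine ⟨c, ?_⟩
  have hfinal := hmid c (Q c)
  have h1 := hσ_le ((1/2 : ℝ) • (c + Q c))
  have : ‖c - Q c‖^2 ≤ 0 := by nlinarith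
  have : ‖c - Q c‖ = 0 := by nlinarith [norm_nonneg (c - Q c)]
  have : c - Q c = 0 := norm_eq_zero.1 this
  have := sub_eq_zero.1 this
  exact this.symm

lemma IsAvg.tendsto_delta_zero (hQ : IsAvg Q β) (hβ : 0 < β)
    (hsd : ∀ ε > (0:ℝ), ∃ y : H, ‖y - Q y‖ ≤ ε) (x : H) :
    Tendsto (fun n => ‖Q^[n] x - Q^[n+1] x‖) atTop (nhds 0) := by
  rw [Metric.tendsto_atTop]
  intro ε hε
  obtain ⟨y, hy⟩ := hsd (ε/3) (by positivity)
  obtain ⟨n₀, hn₀⟩ := exists_nat_gt (‖x - y‖^2/(β*(ε/3)^2))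
  have hex : ∃ t, t < n₀ + 1 ∧ ‖(Q^[t] x - Q^[t+1] x) - (Q^[t] y - Q^[t+1] y)‖ ≤ ε/3 := by
    by_contra hc
    push_neg at hc
    have hall : ∀ t ∈ Finset.range (n₀+1),
        (ε/3)^2 ≤ ‖(Q^[t] x - Q^[t+1] x) - (Q^[t] y - Q^[t+1] y)‖^2 := by
      intro t ht
      rw [Finset.mem_range] at ht
      have := hc t ht
      nlinarith [norm_nonneg ((Q^[t] x - Q^[t+1] x) - (Q^[t] y - Q^[t+1] y)), hε]
    have hsum := Finset.card_nsmul_le_sum (Finset.range (n₀+1)) _ _ hall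
    rw [Finset.card_range, nsmul_eq_mul] at hsum
    have h2 := hQ.sum_sq x y (n₀+1)
    rw [div_lt_iff₀ (by positivity)] at hn₀
    push_cast at hsum
    nlinarith [mul_le_mul_of_nonneg_left hsum hβ.le,
      mul_pos hβ (by positivity : (0:ℝ) < (ε/3)^2)]
  obtain ⟨t, ht, htle⟩ := hex
  refine ⟨t, fun m hm => ?_⟩
  have h1 : ‖Q^[m] x - Q^[m+1] x‖ ≤ ‖Q^[t] x - Q^[t+1] x‖ := hQ.delta_anti hβ.le x hm
  have h2 : ‖Q^[t] y - Q^[t+1] y‖ ≤ ‖Q^[0] y - Q^[0+1] y‖ :=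
    hQ.delta_anti hβ.le y (Nat.zero_le t)
  have h3 : ‖Q^[0] y - Q^[0+1] y‖ = ‖y - Q y‖ := by simp
  have h4 : ‖Q^[t] x - Q^[t+1] x‖
      ≤ ‖(Q^[t] x - Q^[t+1] x) - (Q^[t] y - Q^[t+1] y)‖ + ‖Q^[t] y - Q^[t+1] y‖ := by
    have e : Q^[t] x - Q^[t+1] x
        = ((Q^[t] x - Q^[t+1] x) - (Q^[t] y - Q^[t+1] y)) + (Q^[t] y - Q^[t+1] y) := by abel
    nth_rewrite 1 [e]
    exact norm_add_le _ _
  rw [Real.dist_eq, sub_zero, abs_of_nonneg (norm_nonneg _)]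
  have : ‖Q^[m] x - Q^[m+1] x‖ ≤ 2*ε/3 := by
    rw [h3] at h2
    linarith
  linarith

/-- Part (i): fixed-point free implies norm blowup -/
lemma IsAvg.tendsto_norm_atTop (hQ : IsAvg Q β) (hβ : 0 < β)
    (hnofix : ¬ ∃ z : H, Q z = z) (x : H) :
    Tendsto (fun n => ‖Q^[n] x‖) atTop atTop := by
  classical
  set D : Set H := closure (convexHull ℝ (Set.range (fun y => y - Q y))) with hD
  have hDne : D.Nonempty := ⟨x - Q x, subset_closure (subset_convexHull ℝ _ ⟨x, rfl⟩)⟩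
  have hDconv : Convex ℝ D := (convex_convexHull ℝ _).closure
  have hDcomp : IsComplete D := isClosed_closure.isComplete
  obtain ⟨v, hvD, hvmin⟩ := exists_norm_eq_iInf_of_complete_convex hDne hDcomp hDconv 0
  have hchar := (norm_eq_iInf_iff_real_inner_le_zero hDconv hvD).1 hvmin
  have hv2 : ∀ w ∈ D, ‖v‖^2 ≤ ⟪w, v⟫ := by
    intro w hw
    have := hchar w hw
    have e : ⟪(0:H) - v, w - v⟫ = -⟪w, v⟫ + ‖v‖^2 := by
      simp only [zero_sub, inner_neg_left, inner_sub_right,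
        real_inner_self_eq_norm_sq]
      rw [real_inner_comm v w]
      ring
    rw [e] at this
    linarith
  have hmem : ∀ z : H, z - Q z ∈ D :=
    fun z => subset_closure (subset_convexHull ℝ _ ⟨z, rfl⟩)
  rcases eq_or_ne v 0 with hv0 | hv0
  · -- v = 0 : asymptotic regularity + asymptotic center
    rw [hv0] at hvD
    have hsd : ∀ ε > (0:ℝ), ∃ y : H, ‖y - Q y‖ ≤ ε :=
      fun ε hε => hQ.small_displacement hβ.le hvD hε
    have hreg := hQ.tendsto_delta_zero hβ hsd x
    by_contra hcon
    rw [tendsto_atTop] at hcon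
    push_neg at hcon
    obtain ⟨M, hM⟩ := hcon
    obtain ⟨φ, hφ, hφM⟩ := Filter.extraction_of_frequently_atTop hM
    exact hnofix (exists_fixed_of_bounded_subseq hQ hβ.le x hreg hφ
      (fun k => (hφM k).le))
  · -- v ≠ 0 : linear growth
    have hnv : 0 < ‖v‖ := norm_pos_iff.2 hv0
    have key : ∀ n : ℕ, (n:ℝ) * ‖v‖^2 ≤ ⟪x - Q^[n] x, v⟫ := by
      intro n
      induction n with
      | zero => simp
      | succ n ih =>
        have hsplit : x - Q^[n+1] x = (x - Q^[n] x) + (Q^[n] x - Q^[n+1] x) := by abel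
        have hdel : ‖v‖^2 ≤ ⟪Q^[n] x - Q^[n+1] x, v⟫ := by
          have : Q^[n] x - Q^[n+1] x = Q^[n] x - Q (Q^[n] x) := by
            rw [Function.iterate_succ_apply']
          rw [this]
          exact hv2 _ (hmem _)
        rw [hsplit, inner_add_left]
        push_cast
        nlinarith
    have hlow : ∀ n : ℕ, (n:ℝ) * ‖v‖ - ‖x‖ ≤ ‖Q^[n] x‖ := by
      intro n
      have h1 := key n
      have h2 : ⟪x - Q^[n] x, v⟫ ≤ ‖x - Q^[n] x‖ * ‖v‖ := real_inner_le_norm _ _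
      have h3 : ‖x - Q^[n] x‖ ≤ ‖x‖ + ‖Q^[n] x‖ := norm_sub_le _ _
      nlinarith
    apply tendsto_atTop_mono hlow
    have h1 : Tendsto (fun n : ℕ => (n:ℝ) * ‖v‖) atTop atTop :=
      Tendsto.atTop_mul_const hnv tendsto_natCast_atTop_atTop
    exact tendsto_atTop_add_const_right _ _ h1

/-- weak sequential compactness of bounded sequences in a Hilbert space -/
lemma exists_weak_subseq (a : ℕ → H) (M : ℝ) (hM : ∀ n, ‖a n‖ ≤ M) :
    ∃ ψ : ℕ → ℕ, StrictMono ψ ∧ ∃ w : H,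
      ∀ y : H, Tendsto (fun k => ⟪a (ψ k), y⟫) atTop (nhds ⟪w, y⟫) := by
  classical
  have hM0 : 0 ≤ M := le_trans (norm_nonneg _) (hM 0)
  set Φ : ℕ → (ℕ → ℝ) := fun n m => ⟪a n, a m⟫ with hΦ
  set K : Set (ℕ → ℝ) := Set.univ.pi (fun _ => Set.Icc (-(M*M)) (M*M)) with hKdef
  have hK : IsCompact K := isCompact_univ_pi (fun _ => isCompact_Icc)
  have hΦK : ∀ n, Φ n ∈ K := by
    intro n m _
    have h1 : |⟪a n, a m⟫| ≤ ‖a n‖ * ‖a m‖ := abs_real_inner_le_norm _ _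
    have h2 : ‖a n‖ * ‖a m‖ ≤ M * M :=
      mul_le_mul (hM n) (hM m) (norm_nonneg _) hM0
    rw [Set.mem_Icc]
    constructor
    · linarith [neg_abs_le ⟪a n, a m⟫]
    · linarith [le_abs_self ⟪a n, a m⟫]
  obtain ⟨g, _, ψ, hψ, hg⟩ := hK.tendsto_subseq hΦK
  rw [tendsto_pi_nhds] at hg
  refine ⟨ψ, hψ, ?_⟩
  -- the closed subspace generated by the sequence
  set V : Submodule ℝ H := (Submodule.span ℝ (Set.range a)).topologicalClosure with hV
  have haV : ∀ n, a n ∈ V :=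
    fun n => Submodule.le_topologicalClosure _ (Submodule.subset_span ⟨n, rfl⟩)
  -- convergence on the span
  have hspan : ∀ y ∈ Submodule.span ℝ (Set.range a),
      ∃ L : ℝ, Tendsto (fun k => ⟪a (ψ k), y⟫) atTop (nhds L) := by
    intro y hy
    induction hy using Submodule.span_induction with
    | mem z hz =>
      obtain ⟨m, rfl⟩ := hz
      exact ⟨g m, by simpa [hΦ] using hg m⟩
    | zero => exact ⟨0, by simp [tendsto_const_nhds]⟩
    | add y z _ _ hy hz =>
      obtain ⟨Ly, hLy⟩ := hy
      obtain ⟨Lz, hLz⟩ := hz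
      exact ⟨Ly + Lz, by simpa [inner_add_right] using hLy.add hLz⟩
    | smul c y _ hy =>
      obtain ⟨Ly, hLy⟩ := hy
      exact ⟨c * Ly, by simpa [real_inner_smul_right] using hLy.const_mul c⟩
  -- convergence on the closure
  have hclos : ∀ y ∈ V, ∃ L : ℝ, Tendsto (fun k => ⟪a (ψ k), y⟫) atTop (nhds L) := by
    intro y hy
    have hcauchy : CauchySeq (fun k => ⟪a (ψ k), y⟫) := by
      rw [Metric.cauchySeq_iff]
      intro ε hε
      have hyc : y ∈ closure ((Submodule.span ℝ (Set.range a) : Submodule ℝ H) : Set H) := by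
        rwa [← Submodule.topologicalClosure_coe]
      rw [SeminormedAddCommGroup.mem_closure_iff] at hyc
      obtain ⟨y', hy', hyy'⟩ := hyc (ε/(3*(M+1))) (by positivity)
      obtain ⟨L, hL⟩ := hspan y' hy'
      have hLc : CauchySeq (fun k => ⟪a (ψ k), y'⟫) := hL.cauchySeq
      rw [Metric.cauchySeq_iff] at hLc
      obtain ⟨N, hN⟩ := hLc (ε/3) (by positivity)
      refine ⟨N, fun k hk l hl => ?_⟩
      have hbd : ∀ j : ℕ, |⟪a (ψ j), y⟫ - ⟪a (ψ j), y'⟫| ≤ M * (ε/(3*(M+1))) := by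
        intro j
        rw [← inner_sub_right]
        calc |⟪a (ψ j), y - y'⟫| ≤ ‖a (ψ j)‖ * ‖y - y'‖ := abs_real_inner_le_norm _ _
        _ ≤ M * (ε/(3*(M+1))) := by
              apply mul_le_mul (hM _) hyy'.le (norm_nonneg _) hM0
      have hMε : M * (ε/(3*(M+1))) ≤ ε/3 := by
        rw [mul_comm, div_mul_eq_mul_div, div_le_div_iff₀ (by positivity) (by norm_num)]
        nlinarith [hε.le, hM0]
      have h3 := hN k hk l hl
      rw [Real.dist_eq] at h3 ⊢
      have e : ⟪a (ψ k), y⟫ - ⟪a (ψ l), y⟫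
          = (⟪a (ψ k), y⟫ - ⟪a (ψ k), y'⟫) + (⟪a (ψ k), y'⟫ - ⟪a (ψ l), y'⟫)
            + (⟪a (ψ l), y'⟫ - ⟪a (ψ l), y⟫) := by ring
      rw [e]
      calc |_ + _ + _| ≤ |(⟪a (ψ k), y⟫ - ⟪a (ψ k), y'⟫) + (⟪a (ψ k), y'⟫ - ⟪a (ψ l), y'⟫)|
            + |⟪a (ψ l), y'⟫ - ⟪a (ψ l), y⟫| := abs_add_le _ _
      _ ≤ |⟪a (ψ k), y⟫ - ⟪a (ψ k), y'⟫| + |⟪a (ψ k), y'⟫ - ⟪a (ψ l), y'⟫|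
            + |⟪a (ψ l), y'⟫ - ⟪a (ψ l), y⟫| := by linarith [abs_add_le (⟪a (ψ k), y⟫ - ⟪a (ψ k), y'⟫) (⟪a (ψ k), y'⟫ - ⟪a (ψ l), y'⟫)]
      _ < ε := by
            have b1 := hbd k
            have b2 := hbd l
            rw [abs_sub_comm] at b2
            linarith
    obtain ⟨L, hL⟩ := cauchySeq_tendsto_of_complete hcauchy
    exact ⟨L, hL⟩
  -- extend to all of H by orthogonality
  have hall : ∀ y : H, ∃ L : ℝ, Tendsto (fun k => ⟪a (ψ k), y⟫) atTop (nhds L) := by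
    intro y
    have : CompleteSpace V := (Submodule.isClosed_topologicalClosure _).completeSpace_coe
    obtain ⟨yv, hyv, yp, hyp, hsum⟩ := V.exists_add_mem_mem_orthogonal y
    obtain ⟨L, hL⟩ := hclos yv hyv
    refine ⟨L, ?_⟩
    have hz : ∀ k, ⟪a (ψ k), y⟫ = ⟪a (ψ k), yv⟫ := by
      intro k
      rw [hsum, inner_add_right]
      have : ⟪a (ψ k), yp⟫ = 0 := (Submodule.mem_orthogonal V yp).1 hyp _ (haV _)
      rw [this, add_zero]
    simpa only [hz] using hL
  choose L hL using hall
  -- the limit functional and its representing vector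
  have hadd : ∀ y z : H, L (y + z) = L y + L z := by
    intro y z
    refine tendsto_nhds_unique (hL (y + z)) ?_
    simpa [inner_add_right] using (hL y).add (hL z)
  have hsmul : ∀ (c : ℝ) (y : H), L (c • y) = c * L y := by
    intro c y
    refine tendsto_nhds_unique (hL (c • y)) ?_
    simpa [real_inner_smul_right] using (hL y).const_mul c
  have hbound : ∀ y : H, |L y| ≤ M * ‖y‖ := by
    intro y
    have h1 : Tendsto (fun k => |⟪a (ψ k), y⟫|) atTop (nhds |L y|) := (hL y).abs
    apply le_of_tendsto h1
    filter_upwards with k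
    calc |⟪a (ψ k), y⟫| ≤ ‖a (ψ k)‖ * ‖y‖ := abs_real_inner_le_norm _ _
    _ ≤ M * ‖y‖ := mul_le_mul_of_nonneg_right (hM _) (norm_nonneg _)
  set f : H →ₗ[ℝ] ℝ :=
    { toFun := L, map_add' := hadd, map_smul' := by intro c y; simpa using hsmul c y } with hf
  set f' : H →L[ℝ] ℝ := f.mkContinuous M (fun y => by rw [Real.norm_eq_abs]; exact hbound y) with hf'
  set w : H := (InnerProductSpace.toDual ℝ H).symm f' with hw
  refine ⟨w, fun y => ?_⟩
  have : ⟪w, y⟫ = f' y := InnerProductSpace.toDual_symm_apply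
  rw [this]
  exact hL y

/-- the fixed point set of a nonexpansive map is convex -/
lemma IsAvg.fix_convex (hQ : IsAvg Q β) (hβ : 0 ≤ β) :
    Convex ℝ {z : H | Q z = z} := by
  intro p hp q hq t s ht hs hts
  simp only [Set.mem_setOf_eq] at hp hq ⊢
  set m := t • p + s • q with hm
  set d := ‖p - q‖ with hd
  have ht' : t = 1 - s := by linarith
  have h1 : ‖Q m - p‖ ≤ s * d := by
    have e : m - p = s • (q - p) := by rw [hm, ht']; module
    calc ‖Q m - p‖ = ‖Q m - Q p‖ := by rw [hp]
    _ ≤ ‖m - p‖ := hQ.nonexp hβ _ _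
    _ = s * d := by
        rw [e, norm_smul, Real.norm_eq_abs, abs_of_nonneg hs, hd, norm_sub_rev]
  have h2 : ‖Q m - q‖ ≤ t * d := by
    have e : m - q = t • (p - q) := by rw [hm, ht']; module
    calc ‖Q m - q‖ = ‖Q m - Q q‖ := by rw [hq]
    _ ≤ ‖m - q‖ := hQ.nonexp hβ _ _
    _ = t * d := by rw [e, norm_smul, Real.norm_eq_abs, abs_of_nonneg ht, hd]
  have h3 : d ≤ ‖p - Q m‖ + ‖Q m - q‖ := by
    calc d = ‖(p - Q m) + (Q m - q)‖ := by rw [hd]; congr 1; abel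
    _ ≤ _ := norm_add_le _ _
  have hrev : ‖p - Q m‖ = ‖Q m - p‖ := norm_sub_rev _ _
  have hstd : s*d + t*d = d := by linear_combination d * hts
  have e1 : ‖Q m - p‖ = s * d := by linarith
  have e2 : ‖Q m - q‖ = t * d := by linarith
  have htr : ‖(p - Q m) + (Q m - q)‖ = ‖p - Q m‖ + ‖Q m - q‖ := by
    have : (p - Q m) + (Q m - q) = p - q := by abel
    rw [this, ← hd]
    linarith
  have hin : ⟪p - Q m, Q m - q⟫ = ‖p - Q m‖ * ‖Q m - q‖ := by
    have hsq := congrArg (fun r => r^2) htr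
    rw [norm_add_sq_real] at hsq
    nlinarith
  have hexp : ‖Q m - m‖^2 = t^2*‖Q m - p‖^2 + 2*(t*s*⟪Q m - p, Q m - q⟫) + s^2*‖Q m - q‖^2 := by
    have e : Q m - m = t•(Q m - p) + s•(Q m - q) := by rw [hm, ht']; module
    rw [e, norm_add_sq_real, norm_smul, norm_smul, real_inner_smul_left, real_inner_smul_right]
    simp only [Real.norm_eq_abs, abs_of_nonneg ht, abs_of_nonneg hs]
    ring
  have hin2 : ⟪Q m - p, Q m - q⟫ = -(s*d*(t*d)) := by
    have : ⟪Q m - p, Q m - q⟫ = -⟪p - Q m, Q m - q⟫ := by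
      rw [← inner_neg_left]; congr 1; abel
    rw [this, hin, hrev, e1, e2]
  have hzero : ‖Q m - m‖^2 = 0 := by
    rw [hexp, hin2, e1, e2]; ring
  have : Q m - m = 0 := by
    rw [← norm_eq_zero]
    nlinarith [norm_nonneg (Q m - m)]
  exact sub_eq_zero.1 this

lemma IsAvg.continuous (hQ : IsAvg Q β) (hβ : 0 ≤ β) : Continuous Q := by
  have : LipschitzWith 1 Q := by
    apply LipschitzWith.of_dist_le_mul
    intro x y
    rw [dist_eq_norm, dist_eq_norm, NNReal.coe_one, one_mul]
    exact hQ.nonexp hβ x y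
  exact this.continuous

/-- Part (ii): weak convergence to a fixed point -/
lemma IsAvg.weak_conv (hQ : IsAvg Q β) (hβ : 0 < β) (z₀ : H) (hz₀ : Q z₀ = z₀) (x : H) :
    ∃ z : H, Q z = z ∧
      ∀ y : H, Tendsto (fun n => ⟪Q^[n] x, y⟫) atTop (nhds ⟪z, y⟫) := by
  classical
  set o : ℕ → H := fun n => Q^[n] x with ho
  set F : Set H := {z : H | Q z = z} with hF
  have hFne : F.Nonempty := ⟨z₀, hz₀⟩
  have hFclosed : IsClosed F := isClosed_eq (hQ.continuous hβ.le) continuous_id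
  have hFconv : Convex ℝ F := hQ.fix_convex hβ.le
  -- uniform bound on the orbit
  set M₀ : ℝ := ‖x - z₀‖ + ‖z₀‖ with hM₀
  have hobd : ∀ n, ‖o n‖ ≤ M₀ := by
    intro n
    have h1 : ‖o n - z₀‖ ≤ ‖o 0 - z₀‖ := hQ.dist_fix_anti hβ.le x z₀ hz₀ (Nat.zero_le n)
    have h2 : ‖o 0 - z₀‖ = ‖x - z₀‖ := by simp [ho]
    have h3 : ‖o n‖ ≤ ‖o n - z₀‖ + ‖z₀‖ := by
      calc ‖o n‖ = ‖(o n - z₀) + z₀‖ := by congr 1; abel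
      _ ≤ _ := norm_add_le _ _
    rw [hM₀]; linarith
  -- asymptotic regularity
  have hreg : Tendsto (fun n => ‖Q^[n] x - Q^[n+1] x‖) atTop (nhds 0) := by
    apply hQ.tendsto_delta_zero hβ
    intro ε hε
    exact ⟨z₀, by rw [hz₀]; simp [hε.le]⟩
  -- metric projection onto F
  have hproj : ∀ w : H, ∃ p, p ∈ F ∧ (∀ u ∈ F, ‖w - p‖ ≤ ‖w - u‖) ∧
      (∀ u ∈ F, ⟪w - p, u - p⟫ ≤ 0) := by
    intro w
    obtain ⟨p, hpF, hpmin⟩ :=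
      exists_norm_eq_iInf_of_complete_convex hFne hFclosed.isComplete hFconv w
    have hne : Nonempty F := ⟨⟨z₀, hz₀⟩⟩
    refine ⟨p, hpF, ?_, (norm_eq_iInf_iff_real_inner_le_zero hFconv hpF).1 hpmin⟩
    intro u hu
    rw [hpmin]
    exact ciInf_le ⟨0, by rintro b ⟨u', rfl⟩; exact norm_nonneg _⟩ (⟨u, hu⟩ : F)
  choose pr hprF hprmin hprVI using hproj
  set zs : ℕ → H := fun n => pr (o n) with hzs
  set ds : ℕ → ℝ := fun n => ‖o n - zs n‖ with hds
  -- Fejér monotonicity facts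
  have hfejer : ∀ z ∈ F, Antitone (fun n => ‖o n - z‖) :=
    fun z hz => hQ.dist_fix_anti hβ.le x z hz
  have hd_anti : Antitone ds := by
    intro n m hnm
    calc ds m ≤ ‖o m - zs n‖ := hprmin (o m) (zs n) (hprF (o n))
    _ ≤ ‖o n - zs n‖ := hfejer (zs n) (hprF (o n)) hnm
  have hd0 : ∀ n, 0 ≤ ds n := fun n => norm_nonneg _
  have hkey : ∀ n m, n ≤ m → ‖zs n - zs m‖^2 ≤ (ds n)^2 - (ds m)^2 := by
    intro n m hnm
    have hVI := hprVI (o m) (zs n) (hprF (o n))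
    have hexp : ‖o m - zs n‖^2
        = ‖o m - zs m‖^2 - 2*⟪o m - zs m, zs n - zs m⟫ + ‖zs n - zs m‖^2 := by
      have e : o m - zs n = (o m - zs m) - (zs n - zs m) := by abel
      rw [e, norm_sub_sq_real]
    have hf : ‖o m - zs n‖ ≤ ds n := by
      calc ‖o m - zs n‖ ≤ ‖o n - zs n‖ := hfejer (zs n) (hprF (o n)) hnm
      _ = ds n := rfl
    have h1 : ‖o m - zs n‖^2 ≤ (ds n)^2 := by
      nlinarith [norm_nonneg (o m - zs n), hd0 n]
    have hdm : ds m = ‖o m - zs m‖ := rfl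
    nlinarith [hexp, hVI, h1, hdm]
  -- the shadow sequence converges
  have hdbd : BddBelow (Set.range (fun n => (ds n)^2)) :=
    ⟨0, by rintro b ⟨n, rfl⟩; positivity⟩
  set Ls : ℝ := ⨅ n, (ds n)^2 with hLs
  have hLle : ∀ n, Ls ≤ (ds n)^2 := fun n => ciInf_le hdbd n
  have hzcauchy : CauchySeq zs := by
    rw [Metric.cauchySeq_iff]
    intro ε hε
    obtain ⟨N, hN⟩ : ∃ N, (ds N)^2 < Ls + ε^2/2 := by
      apply exists_lt_of_ciInf_lt
      rw [← hLs]; nlinarith [hε]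
    refine ⟨N, fun k hk l hl => ?_⟩
    rw [dist_eq_norm]
    rcases le_total k l with hkl | hkl
    · have := hkey k l hkl
      have h1 : (ds k)^2 ≤ (ds N)^2 := by
        have := hd_anti hk
        nlinarith [hd0 k, hd0 N]
      have h2 := hLle l
      nlinarith [norm_nonneg (zs k - zs l)]
    · have := hkey l k hkl
      have h1 : (ds l)^2 ≤ (ds N)^2 := by
        have := hd_anti hl
        nlinarith [hd0 l, hd0 N]
      have h2 := hLle k
      rw [norm_sub_rev]
      nlinarith [norm_nonneg (zs l - zs k)]
  obtain ⟨zl, hzl⟩ := cauchySeq_tendsto_of_complete hzcauchy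
  have hzlF : zl ∈ F :=
    hFclosed.mem_of_tendsto hzl (Eventually.of_forall (fun n => hprF (o n)))
  refine ⟨zl, hzlF, ?_⟩
  intro y
  -- it suffices to prove convergence along subsequences of subsequences
  apply tendsto_of_subseq_tendsto
  intro ns hns
  obtain ⟨ψ, hψ, w, hw⟩ := exists_weak_subseq (fun k => o (ns k)) M₀ (fun k => hobd _)
  refine ⟨ψ, ?_⟩
  set θ : ℕ → ℕ := fun k => ns (ψ k) with hθ
  have hθtop : Tendsto θ atTop atTop := hns.comp hψ.tendsto_atTop
  -- the weak limit w is a fixed point (demiclosedness)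
  have hdθ : Tendsto (fun k => ‖o (θ k) - o (θ k + 1)‖) atTop (nhds 0) := hreg.comp hθtop
  have hwfix : Q w = w := by
    have hineq : ∀ k, ‖w - Q w‖^2 ≤ ‖o (θ k) - o (θ k + 1)‖^2
        + 2*(M₀ + ‖w‖)*‖o (θ k) - o (θ k + 1)‖ - 2*⟪o (θ k) - w, w - Q w⟫ := by
      intro k
      set n := θ k
      set dn := ‖o n - o (n+1)‖ with hdn
      have t1 : ‖o n - Q w‖ ≤ dn + ‖o n - w‖ := by
        have e : o n - Q w = (o n - o (n+1)) + (Q (o n) - Q w) := by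
          rw [ho]
          simp only [Function.iterate_succ_apply']
          abel
        calc ‖o n - Q w‖ ≤ ‖o n - o (n+1)‖ + ‖Q (o n) - Q w‖ := by
              rw [e]; exact norm_add_le _ _
        _ ≤ dn + ‖o n - w‖ := by
              have := hQ.nonexp hβ.le (o n) w
              rw [hdn]; linarith
      have t2 : ‖o n - Q w‖^2
          = ‖o n - w‖^2 + 2*⟪o n - w, w - Q w⟫ + ‖w - Q w‖^2 := by
        have e : o n - Q w = (o n - w) + (w - Q w) := by abel
        rw [e, norm_add_sq_real]
      have t3 : ‖o n - w‖ ≤ M₀ + ‖w‖ := by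
        have : ‖o n - w‖ ≤ ‖o n‖ + ‖w‖ := norm_sub_le _ _
        linarith [hobd n]
      have hdn0 : 0 ≤ dn := norm_nonneg _
      nlinarith [t1, t2, t3, norm_nonneg (o n - Q w), norm_nonneg (o n - w),
        mul_le_mul_of_nonneg_left t3 hdn0]
    have hRHS : Tendsto (fun k => ‖o (θ k) - o (θ k + 1)‖^2
        + 2*(M₀ + ‖w‖)*‖o (θ k) - o (θ k + 1)‖ - 2*⟪o (θ k) - w, w - Q w⟫) atTop (nhds 0) := by
      have l1 : Tendsto (fun k => ‖o (θ k) - o (θ k + 1)‖^2) atTop (nhds 0) := by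
        have := hdθ.mul hdθ
        simpa [sq] using this
      have l2 : Tendsto (fun k => 2*(M₀ + ‖w‖)*‖o (θ k) - o (θ k + 1)‖) atTop (nhds 0) := by
        have := hdθ.const_mul (2*(M₀ + ‖w‖))
        simpa using this
      have l3 : Tendsto (fun k => ⟪o (θ k) - w, w - Q w⟫) atTop (nhds 0) := by
        have e : ∀ k, ⟪o (θ k) - w, w - Q w⟫ = ⟪o (θ k), w - Q w⟫ - ⟪w, w - Q w⟫ := by
          intro k; rw [inner_sub_left]
        simp only [e]
        have := (hw (w - Q w)).sub_const ⟪w, w - Q w⟫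
        simpa using this
      have := (l1.add l2).sub (l3.const_mul 2)
      simpa [mul_comm] using this
    have hle : ‖w - Q w‖^2 ≤ 0 := ge_of_tendsto hRHS (Eventually.of_forall hineq)
    have : ‖w - Q w‖ = 0 := by nlinarith [norm_nonneg (w - Q w)]
    have := norm_eq_zero.1 this
    have := sub_eq_zero.1 this
    exact this.symm
  -- identification: w = zl
  have hwzl : w = zl := by
    have hzsθ : Tendsto (fun k => zs (θ k)) atTop (nhds zl) := hzl.comp hθtop
    have hcineq : ∀ k, ⟪o (θ k) - zs (θ k), w - zs (θ k)⟫ ≤ 0 :=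
      fun k => hprVI (o (θ k)) w hwfix
    have hlim : Tendsto (fun k => ⟪o (θ k) - zs (θ k), w - zs (θ k)⟫) atTop
        (nhds (‖w - zl‖^2)) := by
      have e : ∀ k, ⟪o (θ k) - zs (θ k), w - zs (θ k)⟫
          = ⟪o (θ k), w⟫ - ⟪o (θ k), zs (θ k)⟫ - ⟪zs (θ k), w⟫ + ⟪zs (θ k), zs (θ k)⟫ := by
        intro k
        rw [inner_sub_left, inner_sub_right, inner_sub_right]
        ring
      simp only [e]
      have l1 : Tendsto (fun k => ⟪o (θ k), w⟫) atTop (nhds ⟪w, w⟫) := hw w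
      have l2 : Tendsto (fun k => ⟪o (θ k), zs (θ k)⟫) atTop (nhds ⟪w, zl⟫) := by
        have e2 : ∀ k, ⟪o (θ k), zs (θ k)⟫
            = ⟪o (θ k), zs (θ k) - zl⟫ + ⟪o (θ k), zl⟫ := by
          intro k; rw [← inner_add_right]; congr 1; abel
        simp only [e2]
        have l2a : Tendsto (fun k => ⟪o (θ k), zs (θ k) - zl⟫) atTop (nhds 0) := by
          have hbound : ∀ k, ‖⟪o (θ k), zs (θ k) - zl⟫‖ ≤ M₀ * ‖zs (θ k) - zl‖ := by
            intro k
            calc ‖⟪o (θ k), zs (θ k) - zl⟫‖ ≤ ‖o (θ k)‖ * ‖zs (θ k) - zl‖ := by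
                  rw [Real.norm_eq_abs]; exact abs_real_inner_le_norm _ _
            _ ≤ M₀ * ‖zs (θ k) - zl‖ :=
                  mul_le_mul_of_nonneg_right (hobd _) (norm_nonneg _)
          have hg : Tendsto (fun k => M₀ * ‖zs (θ k) - zl‖) atTop (nhds 0) := by
            have h0 : Tendsto (fun k => zs (θ k) - zl) atTop (nhds 0) := by
              have := hzsθ.sub_const zl
              simpa using this
            have h1 := h0.norm
            simp only [norm_zero] at h1
            have h2 := h1.const_mul M₀
            simpa using h2
          exact squeeze_zero_norm hbound hg
        have l2b : Tendsto (fun k => ⟪o (θ k), zl⟫) atTop (nhds ⟪w, zl⟫) := hw zl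
        have := l2a.add l2b
        simpa using this
      have l3 : Tendsto (fun k => ⟪zs (θ k), w⟫) atTop (nhds ⟪zl, w⟫) :=
        hzsθ.inner tendsto_const_nhds
      have l4 : Tendsto (fun k => ⟪zs (θ k), zs (θ k)⟫) atTop (nhds ⟪zl, zl⟫) :=
        hzsθ.inner hzsθ
      have htot := ((l1.sub l2).sub l3).add l4
      have e3 : ⟪w, w⟫ - ⟪w, zl⟫ - ⟪zl, w⟫ + ⟪zl, zl⟫ = ‖w - zl‖^2 := by
        rw [← real_inner_self_eq_norm_sq]
        rw [inner_sub_left, inner_sub_right, inner_sub_right]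
        rw [real_inner_comm zl w]
        ring
      rwa [e3] at htot
    have hle : ‖w - zl‖^2 ≤ 0 := le_of_tendsto hlim (Eventually.of_forall hcineq)
    have : ‖w - zl‖ = 0 := by nlinarith [norm_nonneg (w - zl)]
    exact sub_eq_zero.1 (norm_eq_zero.1 this)
  rw [← hwzl]
  exact hw y

end BBL

section Bridge
variable {H : Type*} {N : ℕ} [NeZero N]
open scoped Fin.NatCast

lemma steps (P : Fin N → H → H) (u : ℕ → H)
    (hu : ∀ k : ℕ, u (k + 1) =
      P ⟨k % N, Nat.mod_lt k (Nat.pos_of_ne_zero (NeZero.ne N))⟩ (u k))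
    (m : ℕ) : ∀ j : ℕ, u (m + j) =
      ((List.ofFn fun t : Fin j =>
        P (⟨m % N, Nat.mod_lt m (Nat.pos_of_ne_zero (NeZero.ne N))⟩ + ((t : ℕ) : Fin N))).foldl
        (fun y f => f y) (u m)) := by
  intro j
  induction j with
  | zero => simp
  | succ j ih =>
    rw [List.ofFn_succ']
    simp only [List.concat_eq_append, List.foldl_append, List.foldl_cons, List.foldl_nil,
      Fin.coe_castSucc, Fin.val_last]
    rw [← ih]
    have hidx : (⟨(m + j) % N, Nat.mod_lt (m+j) (Nat.pos_of_ne_zero (NeZero.ne N))⟩ : Fin N)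
        = ⟨m % N, Nat.mod_lt m (Nat.pos_of_ne_zero (NeZero.ne N))⟩ + ((j : ℕ) : Fin N) := by
      apply Fin.ext
      rw [Fin.val_add, Fin.val_natCast]
      exact Nat.add_mod m j N
    rw [show m + (j+1) = (m + j) + 1 from by ring, hu (m + j), hidx]

lemma orbit (P : Fin N → H → H) (u : ℕ → H)
    (hu : ∀ k : ℕ, u (k + 1) =
      P ⟨k % N, Nat.mod_lt k (Nat.pos_of_ne_zero (NeZero.ne N))⟩ (u k))
    (i : Fin N) (n : ℕ) :
    u (n * N + (i : ℕ) + 1) = (cycOp P i)^[n] (u ((i : ℕ) + 1)) := by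
  induction n with
  | zero => simp
  | succ n ih =>
    have hstep : u ((n+1) * N + (i : ℕ) + 1) = cycOp P i (u (n * N + (i : ℕ) + 1)) := by
      have hm : (n+1) * N + (i : ℕ) + 1 = (n * N + (i : ℕ) + 1) + N := by ring
      rw [hm, steps P u hu (n * N + (i : ℕ) + 1) N]
      have hiN : (⟨(n * N + (i : ℕ) + 1) % N,
          Nat.mod_lt _ (Nat.pos_of_ne_zero (NeZero.ne N))⟩ : Fin N) = i + 1 := by
        apply Fin.ext
        show (n * N + (i : ℕ) + 1) % N = ((i + 1 : Fin N) : ℕ)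
        rw [Fin.val_add, Fin.val_one']
        conv_rhs => rw [show (i : ℕ) + 1 % N = ((i : ℕ) % N + 1 % N) from by
          rw [Nat.mod_eq_of_lt i.isLt]]
        rw [← Nat.add_mod]
        conv_lhs => rw [show n * N + (i : ℕ) + 1 = ((i : ℕ) + 1) + n * N from by ring]
        exact Nat.add_mul_mod_self_right _ _ _
      have hfun : (fun t : Fin N =>
          P ((⟨(n * N + (i : ℕ) + 1) % N,
            Nat.mod_lt _ (Nat.pos_of_ne_zero (NeZero.ne N))⟩ : Fin N) + ((t : ℕ) : Fin N)))
          = fun t : Fin N => P (i + 1 + t) := by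
        funext t
        rw [hiN, Fin.cast_val_eq_self]
      rw [hfun, cycOp]
    rw [hstep, ih]
    exact (Function.iterate_succ_apply' _ _ _).symm

end Bridge

theorem stmt9 {H : Type*} [NormedAddCommGroup H] [InnerProductSpace ℝ H] [CompleteSpace H]
    {N : ℕ} [NeZero N]
    (C : Fin N → Set H) (hne : ∀ i, (C i).Nonempty) (hcl : ∀ i, IsClosed (C i))
    (hcv : ∀ i, Convex ℝ (C i))
    (P : Fin N → H → H) (hP : ∀ i, IsProjOn (P i) (C i))
    (x0 : H) (u : ℕ → H) (hu0 : u 0 = x0)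
    (hu : ∀ k : ℕ, u (k + 1) =
      P ⟨k % N, Nat.mod_lt k (Nat.pos_of_ne_zero (NeZero.ne N))⟩ (u k)) :
    ((∀ i : Fin N, ¬ ∃ z : H, cycOp P i z = z) →
      ∀ i : Fin N, Tendsto (fun n : ℕ => ‖u (n * N + (i : ℕ) + 1)‖) atTop atTop) ∧
    ((∀ i : Fin N, ∃ z : H, cycOp P i z = z) →
      ∀ i : Fin N, ∃ z : H, cycOp P i z = z ∧
        ∀ y : H, Tendsto (fun n : ℕ => ⟪u (n * N + (i : ℕ) + 1), y⟫) atTop (nhds ⟪z, y⟫)) := by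
  have hPavg : ∀ i, IsAvg (P i) 1 := fun i => (hP i).isAvg (hcv i)
  have hβ : (0:ℝ) < 1/(N:ℝ) := by
    have h1 : (0:ℝ) < (N:ℝ) := by exact_mod_cast Nat.pos_of_ne_zero (NeZero.ne N)
    positivity
  constructor
  · intro hnf i
    have hQ := isAvg_cycOp P hPavg i
    have hgrow := hQ.tendsto_norm_atTop hβ (hnf i) (u ((i:ℕ)+1))
    apply hgrow.congr
    intro n
    rw [orbit P u hu i n]
  · intro hfix i
    obtain ⟨z₀, hz₀⟩ := hfix i
    have hQ := isAvg_cycOp P hPavg i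
    obtain ⟨z, hzfix, hconv⟩ := hQ.weak_conv hβ z₀ hz₀ (u ((i:ℕ)+1))
    refine ⟨z, hzfix, fun y => ?_⟩
    apply (hconv y).congr
    intro n
    rw [orbit P u hu i n]
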